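/- Let y¹, y² : ℕ → ℝ be sequences with y¹(i) ≠ 0 and y²(i) ≠ 0 for all i. Define x²(i) = y¹(i+1), x¹(i) = y¹(i)/y¹(i+1), x⁴(i) = y¹(i+2) − y¹(i)y²(i+1)/(y¹(i+1)y²(i)), x³(i) = y²(i) + x⁴(i), u¹(i) = (x⁴(i+1) − x⁴(i) + y²(i+1))/y¹(i+1), and u²(i) = u¹(i) − y²(i+1)/y²(i). Then for all i ∈ ℕ the denominators are nonzero (in particular x⁴(i) + x¹(i)(u¹(i) − u²(i)) = y¹(i+2) ≠ 0), the sequences satisfy all four recursions of the system (ex-02), and the outputs are recovered as y¹(i) = x¹(i)x²(i) and y²(i) = x³(i) − x⁴(i). Hence y¹ = x¹x², y² = x³ − x⁴ are flat outputs of (ex-02): every such pair of output sequences parametrizes a trajectory. -/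

import Mathlib

/-- Let `y¹, y² : ℕ → ℝ` with `y¹(i) ≠ 0` and `y²(i) ≠ 0` for all `i`.  With
`x²(i) = y¹(i+1)`, `x¹(i) = y¹(i)/y¹(i+1)`,
`x⁴(i) = y¹(i+2) − y¹(i)y²(i+1)/(y¹(i+1)y²(i))`, `x³(i) = y²(i) + x⁴(i)`,
`u¹(i) = (x⁴(i+1) − x⁴(i) + y²(i+1))/y¹(i+1)` and
`u²(i) = u¹(i) − y²(i+1)/y²(i)`, the denominators are nonzero (in particular
`x⁴(i) + x¹(i)(u¹(i) − u²(i)) = y¹(i+2) ≠ 0`), the sequences satisfy all four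
recursions of the example system (ex-02), and the outputs are recovered as
`y¹(i) = x¹(i)x²(i)`, `y²(i) = x³(i) − x⁴(i)`.  Hence `y¹ = x¹x²`,
`y² = x³ − x⁴` are flat outputs of (ex-02): every such pair of output
sequences parametrizes a trajectory. -/
theorem stmt_15 (y1 y2 : ℕ → ℝ) (hy1 : ∀ i, y1 i ≠ 0) (hy2 : ∀ i, y2 i ≠ 0)
    (x1 x2 x3 x4 u1 u2 : ℕ → ℝ)
    (hx2 : ∀ i, x2 i = y1 (i + 1))
    (hx1 : ∀ i, x1 i = y1 i / y1 (i + 1))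
    (hx4 : ∀ i, x4 i = y1 (i + 2) - y1 i * y2 (i + 1) / (y1 (i + 1) * y2 i))
    (hx3 : ∀ i, x3 i = y2 i + x4 i)
    (hu1 : ∀ i, u1 i = (x4 (i + 1) - x4 i + y2 (i + 1)) / y1 (i + 1))
    (hu2 : ∀ i, u2 i = u1 i - y2 (i + 1) / y2 i) :
    ∀ i : ℕ,
      (x4 i + x1 i * (u1 i - u2 i) = y1 (i + 2) ∧
        x4 i + x1 i * (u1 i - u2 i) ≠ 0) ∧
      (x1 (i + 1) = x2 i / (x4 i + x1 i * (u1 i - u2 i)) ∧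
        x2 (i + 1) = x4 i + x1 i * (u1 i - u2 i) ∧
        x3 (i + 1) = x2 i * u1 i + x4 i ∧
        x4 (i + 1) = x2 i * u1 i + x3 i * (u2 i - u1 i) + x4 i * (u1 i - u2 i + 1)) ∧
      (y1 i = x1 i * x2 i ∧ y2 i = x3 i - x4 i) := by
  intro i
  have h1 := hy1 (i + 1)
  have h2 := hy2 i
  have h3 := hy1 (i + 2)
  have key : x4 i + x1 i * (u1 i - u2 i) = y1 (i + 2) := by
    rw [hx4, hx1, hu2]
    field_simp
    ring
  refine ⟨⟨key, key ▸ h3⟩, ⟨?_, ?_, ?_, ?_⟩, ?_, ?_⟩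
  · rw [key, hx1, hx2]
  · rw [key, hx2]
  · have h4 : y1 (i + 1 + 1) ≠ 0 := hy1 _
    have h5 : y2 (i + 1) ≠ 0 := hy2 _
    rw [hx3 (i+1), hx2, hu1, hx4 (i+1), hx4 i]
    field_simp
    ring
  · rw [hx2, hu2, hu1, hx3]
    field_simp
    ring
  · rw [hx1, hx2]
    field_simp
  · rw [hx3]
    ring
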